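/- (Herbrand's theorem for purely existential sentences.) Let L be a first-order language possessing at least one constant symbol, and let A(α) be a quantifier-free L-formula whose atoms are all relational (no equality atoms) and whose only free variable is α. If the sentence ∃α A(α) is true in every nonempty L-structure, then there exist finitely many closed L-terms m₁,…,mₖ such that the Herbrand disjunction A(m₁) ∨ … ∨ A(mₖ) is true in every nonempty L-structure. -/

import Mathlib

open FirstOrder Language

universe u v

/-- Quantifier-free formulas: built from atomic relational formulas and `⊥` using
the propositional connectives `⊓`, `⊔`, `→`(imp) and `¬`(not) only (no equality
atoms, no quantifiers). -/
inductive IsQFProp {L : FirstOrder.Language} {α : Type*} :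
    ∀ {n : ℕ}, L.BoundedFormula α n → Prop
  | falsum {n : ℕ} : IsQFProp (⊥ : L.BoundedFormula α n)
  | rel {n l : ℕ} (R : L.Relations l) (ts : Fin l → L.Term (α ⊕ Fin n)) :
      IsQFProp (BoundedFormula.rel R ts)
  | inf {n : ℕ} {φ ψ : L.BoundedFormula α n} :
      IsQFProp φ → IsQFProp ψ → IsQFProp (φ ⊓ ψ)
  | sup {n : ℕ} {φ ψ : L.BoundedFormula α n} :
      IsQFProp φ → IsQFProp ψ → IsQFProp (φ ⊔ ψ)
  | imp {n : ℕ} {φ ψ : L.BoundedFormula α n} :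
      IsQFProp φ → IsQFProp ψ → IsQFProp (φ.imp ψ)
  | not {n : ℕ} {φ : L.BoundedFormula α n} :
      IsQFProp φ → IsQFProp φ.not

/-- `A(m)`: the sentence obtained from a formula `A` with one free variable by
substituting the closed term `m` for that variable. -/
def instSentence {L : FirstOrder.Language} (A : L.BoundedFormula Empty 1)
    (m : L.Term Empty) : L.Sentence :=
  BoundedFormula.subst A.toFormula (Sum.elim Empty.elim fun _ => m)

section Aux

variable {L : FirstOrder.Language.{u, v}}

/-- The Herbrand structure on closed terms, with relations pulled back along
evaluation into a given structure `M`. -/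
def herbrandStructure (M : Type (max u v)) [L.Structure M] :
    L.Structure (ULift.{v} (L.Term Empty)) where
  funMap f ts := ⟨Term.func f fun i => (ts i).down⟩
  RelMap R ts := Structure.RelMap (M := M) R fun i => (ts i).down.realize Empty.elim

lemma herbrand_term_realize (M : Type (max u v)) [L.Structure M] {γ : Type*}
    (t : L.Term γ) (v : γ → ULift.{v} (L.Term Empty)) :
    ((@Term.realize L _ (herbrandStructure M) γ v t).down).realize (M := M) Empty.elim
      = t.realize (M := M) (fun b => (v b).down.realize Empty.elim) := by
  induction t with
  | var => rfl
  | func f ts ih =>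
      simp only [Term.realize, herbrandStructure]
      congr 1
      exact congrArg (Structure.funMap (M := M) f) (funext fun i => ih i)

lemma herbrand_formula_transfer (M : Type (max u v)) [L.Structure M] {α : Type*} {n : ℕ}
    {φ : L.BoundedFormula α n} (h : IsQFProp φ)
    (v : α → ULift.{v} (L.Term Empty)) (xs : Fin n → ULift.{v} (L.Term Empty)) :
    (@BoundedFormula.Realize L _ (herbrandStructure M) α n φ v xs)
      ↔ φ.Realize (M := M) (fun a => (v a).down.realize Empty.elim)
          (fun i => (xs i).down.realize Empty.elim) := by
  induction h generalizing v xs with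
  | falsum => exact Iff.rfl
  | rel R ts =>
      have hfun : (fun i => ((@Term.realize L _ (herbrandStructure M) _
              (Sum.elim v xs) (ts i)).down).realize (M := M) Empty.elim)
          = fun i => (ts i).realize (M := M)
              (Sum.elim (fun a => (v a).down.realize Empty.elim)
                (fun i => (xs i).down.realize Empty.elim)) := by
        funext i
        rw [herbrand_term_realize]
        congr 1
        funext a
        cases a <;> rfl
      show Structure.RelMap (M := M) R (fun i => ((@Term.realize L _ (herbrandStructure M) _
              (Sum.elim v xs) (ts i)).down).realize (M := M) Empty.elim) ↔ _
      rw [hfun]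
      exact Iff.rfl
  | inf h1 h2 ih1 ih2 => simp [BoundedFormula.realize_inf, ih1, ih2]
  | sup h1 h2 ih1 ih2 => simp [BoundedFormula.realize_sup, ih1, ih2]
  | imp h1 h2 ih1 ih2 => simp [BoundedFormula.realize_imp, ih1, ih2]
  | not h1 ih1 => simp [BoundedFormula.realize_not, ih1]

lemma realize_foldr_sup (M : Type*) [L.Structure M] (l : List L.Sentence) :
    M ⊨ (l.foldr (· ⊔ ·) ⊥) ↔ ∃ s ∈ l, M ⊨ s := by
  induction l with
  | nil => simp [Sentence.Realize, Formula.Realize]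
  | cons a l ih =>
      simp only [List.foldr_cons, List.mem_cons]
      constructor
      · intro h
        rcases (BoundedFormula.realize_sup.1 h) with h | h
        · exact ⟨a, Or.inl rfl, h⟩
        · rcases ih.1 h with ⟨s, hs, hs'⟩
          exact ⟨s, Or.inr hs, hs'⟩
      · rintro ⟨s, (rfl | hs), hs'⟩
        · exact BoundedFormula.realize_sup.2 (Or.inl hs')
        · exact BoundedFormula.realize_sup.2 (Or.inr (ih.2 ⟨s, hs, hs'⟩))

lemma realize_instSentence (M : Type*) [L.Structure M] (A : L.BoundedFormula Empty 1)
    (t : L.Term Empty) :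
    M ⊨ instSentence A t ↔ A.Realize (M := M) default (fun _ => t.realize Empty.elim) := by
  rw [instSentence, Sentence.Realize, Formula.Realize, BoundedFormula.realize_subst]
  rw [show (BoundedFormula.Realize A.toFormula
      (fun a => (Sum.elim Empty.elim (fun _ => t) a).realize default) default)
    = Formula.Realize A.toFormula
      (fun a => (Sum.elim Empty.elim (fun _ => t) a).realize default) from rfl]
  rw [BoundedFormula.realize_toFormula]
  have h1 : ∀ w w' : Empty → M, w = w' := fun w w' => funext fun x => x.elim
  have h2 : ((fun a => (Sum.elim Empty.elim (fun _ => t) a).realize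
        (default : Empty → M)) ∘ Sum.inr : Fin 1 → M)
      = fun _ => t.realize Empty.elim := by
    funext i
    exact congrArg (fun w => Term.realize w t) (h1 _ _)
  rw [h2, h1 ((fun a => (Sum.elim Empty.elim (fun _ => t) a).realize default) ∘ Sum.inl) default]

end Aux

/-- **Herbrand's theorem for purely existential sentences.**  If `L` has a constant
symbol and `A(α)` is a quantifier-free formula with only relational atoms whose only
free variable is `α`, and the sentence `∃α A(α)` is true in every nonempty
`L`-structure, then there are finitely many closed terms `m₁,…,mₖ` (`k ≥ 1`) such
that the Herbrand disjunction `A(m₁) ∨ … ∨ A(mₖ)` is true in every nonempty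
`L`-structure. -/
theorem herbrand_exists {L : FirstOrder.Language.{u, v}} [Nonempty L.Constants]
    (A : L.BoundedFormula Empty 1) (hA : IsQFProp A)
    (hval : ∀ (M : Type max u v) [L.Structure M], Nonempty M → M ⊨ A.ex) :
    ∃ ms : List (L.Term Empty), ms ≠ [] ∧
      ∀ (M : Type max u v) [L.Structure M], Nonempty M →
        M ⊨ ((ms.map fun m => instSentence A m).foldr (· ⊔ ·) ⊥) := by
  classical
  obtain ⟨c⟩ := ‹Nonempty L.Constants›
  by_contra hcon
  push_neg at hcon
  -- The theory of all negated instances is finitely satisfiable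
  set T : L.Theory := Set.range (fun m : L.Term Empty => (instSentence A m).not) with hT
  have hfin : T.IsFinitelySatisfiable := by
    intro T0 hT0
    have hex : ∀ s ∈ T0, ∃ m : L.Term Empty, (instSentence A m).not = s := by
      intro s hs
      exact hT0 hs
    choose f hf using hex
    set ms : List (L.Term Empty) :=
      (Constants.term c) :: (T0.attach.toList.map fun s => f s.1 s.2) with hms
    have hne : ms ≠ [] := by simp [hms]
    obtain ⟨M, _inst, hM, hMfail⟩ := hcon ms hne
    have hall : ∀ m ∈ ms, ¬ M ⊨ instSentence A m := by
      intro m hm hMm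
      exact hMfail ((realize_foldr_sup M _).2
        ⟨instSentence A m, List.mem_map.2 ⟨m, hm, rfl⟩, hMm⟩)
    haveI : Nonempty M := hM
    haveI : M ⊨ (T0 : L.Theory) := by
      refine ⟨fun φ hφ => ?_⟩
      obtain ⟨s, hs⟩ : ∃ s : {x // x ∈ T0}, φ = s.1 := by
        rcases hφ with hφ
        exact ⟨⟨φ, hφ⟩, rfl⟩
      have hmem : f s.1 s.2 ∈ ms := by
        rw [hms]
        exact List.mem_cons_of_mem _ (List.mem_map.2 ⟨s, Finset.mem_toList.2 (Finset.mem_attach _ _), rfl⟩)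
      have := hall _ hmem
      rw [hs, ← hf s.1 s.2]
      exact (Sentence.realize_not M).2 this
    exact Theory.Model.isSatisfiable M
  obtain ⟨M⟩ := Theory.isSatisfiable_iff_isFinitelySatisfiable.2 hfin
  -- Build the Herbrand structure over M
  letI HS : L.Structure (ULift.{v} (L.Term Empty)) := herbrandStructure (L := L) M
  have hHne : Nonempty (ULift.{v} (L.Term Empty)) := ⟨⟨Constants.term c⟩⟩
  have hex := hval (ULift.{v} (L.Term Empty)) hHne
  rw [Sentence.Realize, Formula.Realize, BoundedFormula.realize_ex] at hex
  obtain ⟨a, ha⟩ := hex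
  -- Transfer to M
  have hM : A.Realize (M := M)
      (fun x => ((default : Empty → ULift.{v} (L.Term Empty)) x).down.realize Empty.elim)
      (fun i => ((Fin.snoc (default : Fin 0 → _) a : Fin 1 → _) i).down.realize Empty.elim) :=
    (herbrand_formula_transfer (L := L) M hA _ _).1 ha
  have hM' : M ⊨ instSentence A a.down := by
    rw [realize_instSentence]
    have e1 : (fun x => ((default : Empty → ULift.{v} (L.Term Empty)) x).down.realize
        (M := M) Empty.elim) = (default : Empty → M) := funext fun x => x.elim
    have e2 : (fun i => ((Fin.snoc (default : Fin 0 → ULift.{v} (L.Term Empty)) a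
          : Fin 1 → _) i).down.realize (M := M) Empty.elim)
        = fun _ : Fin 1 => a.down.realize (M := M) Empty.elim := by
      funext i
      simp [Fin.snoc]
    rw [e1, e2] at hM
    exact hM
  have hmem : (instSentence A a.down).not ∈ T := ⟨a.down, rfl⟩
  have := M.is_model.realize_of_mem _ hmem
  exact ((Sentence.realize_not _).1 this) hM'
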